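/- In any b-uniform basic complex component of excess ℓ ≥ 1 (a smooth connected hypergraph with all chains of minimal length), the number p of chains satisfies p ≤ 3ℓ, and this bound is attained by some component. -/

import Mathlib

/-- Two vertices are linked if some hyperedge contains both. -/
def link {n : ℕ} (E : Finset (Finset (Fin n))) (x y : Fin n) : Prop :=
  ∃ e ∈ E, x ∈ e ∧ y ∈ e

/-- Connectedness: every vertex is reachable from every other. -/
def Connected {n : ℕ} (E : Finset (Finset (Fin n))) : Prop :=
  ∀ x y : Fin n, Relation.ReflTransGen (link E) x y

/-- All hyperedges have exactly `b` vertices. -/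
def Uniform {n : ℕ} (b : ℕ) (E : Finset (Finset (Fin n))) : Prop :=
  ∀ e ∈ E, e.card = b

/-- Degree of a vertex: the number of hyperedges containing it. -/
def degree {n : ℕ} (E : Finset (Finset (Fin n))) (v : Fin n) : ℕ :=
  (E.filter fun e => v ∈ e).card

/-- A smooth hypergraph has no leaf, i.e. no group of `b-1` degree-one
vertices inside a common hyperedge. -/
def SmoothHG {n : ℕ} (b : ℕ) (E : Finset (Finset (Fin n))) : Prop :=
  ¬ ∃ e ∈ E, ∃ S ⊆ e, S.card = b - 1 ∧ ∀ v ∈ S, degree E v = 1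

/-- A special hyperedge contains at least `3` vertices of degree `≥ 2`. -/
def SpecialEdge {n : ℕ} (E : Finset (Finset (Fin n))) (e : Finset (Fin n)) : Prop :=
  e ∈ E ∧ 3 ≤ (e.filter fun v => 2 ≤ degree E v).card

/-- A special vertex belongs to a special hyperedge or has degree `≥ 3`. -/
def SpecialVtx {n : ℕ} (E : Finset (Finset (Fin n))) (v : Fin n) : Prop :=
  (∃ e, SpecialEdge E e ∧ v ∈ e) ∨ 3 ≤ degree E v

/-- Two non-special hyperedges are chain-linked if they share a non-special
vertex of degree `2`. -/
def chainLink {n : ℕ} (E : Finset (Finset (Fin n))) (e f : Finset (Fin n)) : Prop :=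
  e ∈ E ∧ f ∈ E ∧ ¬ SpecialEdge E e ∧ ¬ SpecialEdge E f ∧
    ∃ v, v ∈ e ∧ v ∈ f ∧ degree E v = 2 ∧ ¬ SpecialVtx E v

/-- A chain is a connected class of non-special hyperedges under `chainLink`;
`numChains` is the number of such classes. -/
noncomputable def numChains {n : ℕ} (E : Finset (Finset (Fin n))) : ℕ :=
  Set.ncard {C : Set (Finset (Fin n)) | ∃ e ∈ E, ¬ SpecialEdge E e ∧
    C = {f | Relation.ReflTransGen (chainLink E) e f}}

/-- A basic structure has all of its chains of minimal length:
α-chains have length `2`, β-chains have length `1`, so every chain class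
has at most `2` hyperedges. -/
noncomputable def Basic {n : ℕ} (E : Finset (Finset (Fin n))) : Prop :=
  ∀ e ∈ E, ¬ SpecialEdge E e →
    ({f | Relation.ReflTransGen (chainLink E) e f}).ncard ≤ 2

/-! ### Auxiliary general counting machinery -/

attribute [local instance] Classical.propDecidable

open Finset

namespace ChainsAux

lemma doublecount {α : Type*} [DecidableEq α] (A : Finset α) (F : Finset (Finset α)) :
    ∑ v ∈ A, (F.filter fun e => v ∈ e).card = ∑ e ∈ F, (e ∩ A).card := by
  simp only [Finset.card_filter]
  rw [Finset.sum_comm]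
  congr 1; ext e
  rw [Finset.card_eq_sum_ones (e ∩ A), ← Finset.sum_filter]
  congr 1; ext v; simp [mem_inter, and_comm]

section Main

variable {n b ℓ : ℕ} (E : Finset (Finset (Fin n)))

/-- special edges -/
noncomputable def Es : Finset (Finset (Fin n)) := E.filter (fun e => SpecialEdge E e)
/-- non-special edges -/
noncomputable def Ens : Finset (Finset (Fin n)) := E.filter (fun e => ¬ SpecialEdge E e)
/-- special vertices of degree ≥ 2 -/
noncomputable def S2 : Finset (Fin n) := univ.filter (fun v => SpecialVtx E v ∧ 2 ≤ degree E v)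
/-- non-special vertices of degree ≥ 2 (all have degree exactly 2) -/
noncomputable def Wns : Finset (Fin n) := univ.filter (fun v => ¬ SpecialVtx E v ∧ 2 ≤ degree E v)
/-- all vertices of degree ≥ 2 -/
noncomputable def Dset : Finset (Fin n) := univ.filter (fun v => 2 ≤ degree E v)
/-- special degree -/
noncomputable def degs (v : Fin n) : ℕ := ((Es E).filter (fun e => v ∈ e)).card
/-- non-special degree -/
noncomputable def degns (v : Fin n) : ℕ := ((Ens E).filter (fun e => v ∈ e)).card
/-- degree ≥ 2 vertices of an edge -/
noncomputable def Dv (e : Finset (Fin n)) : Finset (Fin n) := e.filter (fun v => 2 ≤ degree E v)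

lemma card_split : (Es E).card + (Ens E).card = E.card :=
  Finset.card_filter_add_card_filter_not _

lemma deg_split (v : Fin n) : degs E v + degns E v = degree E v := by
  unfold degs degns degree Es Ens
  rw [Finset.filter_comm, Finset.filter_comm (fun e => ¬ SpecialEdge E e)]
  exact Finset.card_filter_add_card_filter_not _

lemma mem_Dset {v : Fin n} : v ∈ Dset E ↔ 2 ≤ degree E v := by simp [Dset]

lemma Dset_split : S2 E ∪ Wns E = Dset E ∧ Disjoint (S2 E) (Wns E) := by
  constructor
  · ext v; simp [S2, Wns, Dset]; tauto
  · simp only [Finset.disjoint_left, S2, Wns, mem_filter]; tauto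

/-- every vertex of an edge has degree at least 1 -/
lemma deg_pos_of_mem {v : Fin n} {e : Finset (Fin n)} (he : e ∈ E) (hv : v ∈ e) :
    1 ≤ degree E v := by
  have : e ∈ E.filter (fun e => v ∈ e) := mem_filter.2 ⟨he, hv⟩
  exact Finset.card_pos.2 ⟨e, this⟩

/-- smoothness: every hyperedge has at least two vertices of degree ≥ 2. -/
lemma two_le_Dv (hu : Uniform b E) (hb : 2 ≤ b) (hs : SmoothHG b E)
    {e : Finset (Fin n)} (he : e ∈ E) : 2 ≤ (Dv E e).card := by
  by_contra h
  push_neg at h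
  have hsplit : (Dv E e).card + (e.filter (fun v => ¬ 2 ≤ degree E v)).card = e.card :=
    Finset.card_filter_add_card_filter_not _
  have hcard : e.card = b := hu e he
  have hT : b - 1 ≤ (e.filter (fun v => ¬ 2 ≤ degree E v)).card := by omega
  obtain ⟨S, hSsub, hScard⟩ := Finset.exists_subset_card_eq hT
  refine hs ⟨e, he, S, hSsub.trans (Finset.filter_subset _ _), hScard, ?_⟩
  intro v hv
  have hv' := hSsub hv
  rw [mem_filter] at hv'
  have := deg_pos_of_mem E he hv'.1
  omega

lemma Dv_card_eq_two (hu : Uniform b E) (hb : 2 ≤ b) (hs : SmoothHG b E)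
    {e : Finset (Fin n)} (he : e ∈ Ens E) : (Dv E e).card = 2 := by
  rw [Ens, mem_filter] at he
  have h2 := two_le_Dv E hu hb hs he.1
  have h3 : ¬ 3 ≤ (Dv E e).card := fun h => he.2 ⟨he.1, h⟩
  omega

lemma three_le_Dv_of_special {e : Finset (Fin n)} (he : e ∈ Es E) : 3 ≤ (Dv E e).card := by
  rw [Es, mem_filter] at he
  exact he.2.2

/-- a vertex of a special edge is special -/
lemma special_of_mem_special {v : Fin n} {e : Finset (Fin n)} (he : SpecialEdge E e)
    (hv : v ∈ e) : SpecialVtx E v := Or.inl ⟨e, he, hv⟩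

/-- w non-special implies degs w = 0 -/
lemma degs_eq_zero {v : Fin n} (hv : ¬ SpecialVtx E v) : degs E v = 0 := by
  rw [degs, Finset.card_eq_zero, Finset.filter_eq_empty_iff]
  intro e he hv'
  rw [Es, mem_filter] at he
  exact hv (special_of_mem_special E he.2 hv')

end Main

end ChainsAux
namespace ChainsAux
section Main2
variable {n b ℓ : ℕ} (E : Finset (Finset (Fin n)))

lemma inter_Dset (e : Finset (Fin n)) : e ∩ Dset E = Dv E e := by
  ext v; simp [Dset, Dv, mem_inter]

/-- Σ_{v ∈ Dset} degns v = 2 |Ens| -/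
lemma sum_degns (hu : Uniform b E) (hb : 2 ≤ b) (hs : SmoothHG b E) :
    ∑ v ∈ Dset E, degns E v = 2 * (Ens E).card := by
  unfold degns
  rw [doublecount]
  rw [Finset.sum_congr rfl (fun e he => by rw [inter_Dset, Dv_card_eq_two E hu hb hs he])]
  simp [mul_comm]

/-- Σ_{v ∈ Dset} degs v = Σ_{e ∈ Es} |Dv e| -/
lemma sum_degs : ∑ v ∈ Dset E, degs E v = ∑ e ∈ Es E, (Dv E e).card := by
  unfold degs
  rw [doublecount]
  exact Finset.sum_congr rfl (fun e he => by rw [inter_Dset])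

lemma sum_degs_ge : 3 * (Es E).card ≤ ∑ v ∈ Dset E, degs E v := by
  rw [sum_degs]
  calc 3 * (Es E).card = ∑ _e ∈ Es E, 3 := by simp [mul_comm]
    _ ≤ _ := Finset.sum_le_sum (fun e he => three_le_Dv_of_special E he)

lemma sum_degs_S2 : ∑ v ∈ S2 E, degs E v = ∑ v ∈ Dset E, degs E v := by
  rw [← (Dset_split E).1, Finset.sum_union (Dset_split E).2]
  have : ∑ v ∈ Wns E, degs E v = 0 := by
    apply Finset.sum_eq_zero
    intro v hv
    rw [Wns, mem_filter] at hv
    exact degs_eq_zero E hv.2.1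
  omega

lemma sum_W_deg : ∑ v ∈ Wns E, degree E v = 2 * (Wns E).card := by
  rw [Finset.sum_congr rfl (fun v hv => ?_), Finset.sum_const, smul_eq_mul, mul_comm]
  rw [Wns, mem_filter] at hv
  have h3 : ¬ 3 ≤ degree E v := fun h => hv.2.1 (Or.inr h)
  have := hv.2.2
  omega

lemma sum_degns_S2 : ∑ v ∈ S2 E, degns E v + 2 * (Wns E).card = ∑ v ∈ Dset E, degns E v := by
  rw [← (Dset_split E).1, Finset.sum_union (Dset_split E).2]
  have : ∑ v ∈ Wns E, degns E v = 2 * (Wns E).card := by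
    rw [← sum_W_deg]
    apply Finset.sum_congr rfl
    intro v hv
    rw [Wns, mem_filter] at hv
    have := deg_split E v
    have := degs_eq_zero E hv.2.1
    omega
  omega

/-- handshake -/
lemma handshake (hu : Uniform b E) : ∑ v ∈ (univ : Finset (Fin n)), degree E v = b * E.card := by
  unfold degree
  rw [doublecount]
  rw [Finset.sum_congr rfl (fun e he => by rw [Finset.inter_univ, hu e he])]
  simp [mul_comm]

/-- all degrees positive, provided E is nonempty and connected -/
lemma deg_pos (hc : Connected E) (hE : E.Nonempty) (hb : 2 ≤ b) (hu : Uniform b E)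
    (v : Fin n) : 1 ≤ degree E v := by
  obtain ⟨e₀, he₀⟩ := hE
  have : e₀.Nonempty := by
    rw [← Finset.card_pos, hu e₀ he₀]; omega
  obtain ⟨x₀, hx₀⟩ := this
  rcases (hc x₀ v).cases_tail with h | ⟨u, _, hl⟩
  · subst h; exact deg_pos_of_mem E he₀ hx₀
  · obtain ⟨e, he, _, hv⟩ := hl
    exact deg_pos_of_mem E he hv

/-- the master identity: ℓ = (|Ens| - |W|) + I - |S2| - |Es|  (in ℤ) -/
lemma master_identity (hu : Uniform b E) (hb : 2 ≤ b) (hs : SmoothHG b E)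
    (hc : Connected E) (hℓ : 1 ≤ ℓ)
    (hx : ((b : ℤ) - 1) * E.card = (n : ℤ) + ℓ) :
    (ℓ : ℤ) = ((Ens E).card - (Wns E).card) + (∑ v ∈ S2 E, degs E v)
      - (S2 E).card - (Es E).card := by
  have hE : E.Nonempty := by
    rcases Finset.eq_empty_or_nonempty E with h | h
    · subst h; simp at hx; omega
    · exact h
  -- n = (number of degree-1 vertices) + |Dset|
  have hD : (Dset E).card + ((univ : Finset (Fin n)).filter (fun v => ¬ 2 ≤ degree E v)).card
      = n := by
    have := Finset.card_filter_add_card_filter_not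
      (s := (univ : Finset (Fin n))) (p := fun v => 2 ≤ degree E v)
    simpa [Dset] using this
  -- degree-1 vertices have degree exactly 1
  have hsum1 : ∑ v ∈ (univ : Finset (Fin n)).filter (fun v => ¬ 2 ≤ degree E v), degree E v
      = ((univ : Finset (Fin n)).filter (fun v => ¬ 2 ≤ degree E v)).card := by
    rw [Finset.card_eq_sum_ones]
    apply Finset.sum_congr rfl
    intro v hv
    rw [mem_filter] at hv
    have := deg_pos E hc hE hb hu v
    omega
  have hsplitu : ∑ v ∈ Dset E, degree E v
      + ∑ v ∈ (univ : Finset (Fin n)).filter (fun v => ¬ 2 ≤ degree E v), degree E v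
      = b * E.card := by
    rw [← handshake E hu, ← Finset.sum_union]
    · congr 1
      ext v; simp only [Dset, mem_union, mem_filter, mem_univ, true_and]; tauto
    · simp only [Finset.disjoint_left, Dset, mem_filter]; tauto
  -- split Σ_Dset degree into degs and degns parts
  have hsplitd : ∑ v ∈ Dset E, degree E v
      = ∑ v ∈ Dset E, degs E v + ∑ v ∈ Dset E, degns E v := by
    rw [← Finset.sum_add_distrib]
    exact Finset.sum_congr rfl (fun v _ => (deg_split E v).symm)
  have h1 := sum_degns E hu hb hs
  have h3 := sum_degs_S2 E
  have h4 := card_split E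
  have hDsplit : (S2 E).card + (Wns E).card = (Dset E).card := by
    rw [← (Dset_split E).1, Finset.card_union_of_disjoint (Dset_split E).2]
  have hDn' : (Dset E).card ≤ n := by
    calc (Dset E).card ≤ (univ : Finset (Fin n)).card := Finset.card_le_card (Finset.subset_univ _)
      _ = n := by simp
  have hNat : ∑ v ∈ S2 E, degs E v + 2 * (Ens E).card + (n - (Dset E).card) = b * E.card := by
    have h0 := hsplitu
    rw [hsplitd, h1, hsum1] at h0
    omega
  have c1 : (∑ v ∈ S2 E, degs E v : ℤ) + 2 * ((Ens E).card : ℤ)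
      + ((n : ℤ) - ((Dset E).card : ℤ)) = (b : ℤ) * (E.card : ℤ) := by
    zify [hDn'] at hNat
    linarith [hNat]
  have c2 : ((Es E).card : ℤ) + ((Ens E).card : ℤ) = (E.card : ℤ) := by exact_mod_cast h4
  have c3 : ((S2 E).card : ℤ) + ((Wns E).card : ℤ) = ((Dset E).card : ℤ) := by
    exact_mod_cast hDsplit
  push_cast
  linarith [hx, c1, c2, c3]
end Main2
end ChainsAux
namespace ChainsAux
section Main3
variable {n b ℓ : ℕ} (E : Finset (Finset (Fin n)))

lemma W_deg_two {w : Fin n} (hw : w ∈ Wns E) : degree E w = 2 ∧ ¬ SpecialVtx E w := by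
  rw [Wns, mem_filter] at hw
  have h3 : ¬ 3 ≤ degree E w := fun h => hw.2.1 (Or.inr h)
  exact ⟨by omega, hw.2.1⟩

lemma edges_of_W {w : Fin n} (hw : w ∈ Wns E) {e f : Finset (Fin n)} (hef : e ≠ f)
    (he : e ∈ E) (hf : f ∈ E) (hwe : w ∈ e) (hwf : w ∈ f) :
    E.filter (fun g => w ∈ g) = {e, f} := by
  have hdeg := (W_deg_two E hw).1
  refine (Finset.eq_of_subset_of_card_le ?_ ?_).symm
  · intro g hg
    rw [Finset.mem_insert, Finset.mem_singleton] at hg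
    rcases hg with h | h <;> subst h <;> exact mem_filter.2 ⟨by assumption, by assumption⟩
  · rw [Finset.card_pair hef]
    exact le_of_eq hdeg

lemma nonspecial_of_W {w : Fin n} (hw : w ∈ Wns E) {e : Finset (Fin n)}
    (hwe : w ∈ e) : ¬ SpecialEdge E e :=
  fun h => (W_deg_two E hw).2 (special_of_mem_special E h hwe)

/-- the degenerate configuration: two edges sharing two degree-2 non-special
vertices is impossible in a connected component of positive excess. -/
lemma exclusion (hu : Uniform b E) (hb : 2 ≤ b) (hs : SmoothHG b E) (hc : Connected E)
    (hℓ : 1 ≤ ℓ) (hx : ((b : ℤ) - 1) * E.card = (n : ℤ) + ℓ)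
    {w w' : Fin n} {e f : Finset (Fin n)} (hww : w ≠ w')
    (hwW : w ∈ Wns E) (hw'W : w' ∈ Wns E) (hef : e ≠ f) (he : e ∈ E) (hf : f ∈ E)
    (hwe : w ∈ e) (hwf : w ∈ f) (hw'e : w' ∈ e) (hw'f : w' ∈ f) : False := by
  have hdw := (W_deg_two E hwW).1
  have hdw' := (W_deg_two E hw'W).1
  have hnse : ¬ SpecialEdge E e := nonspecial_of_W E hwW hwe
  have hWmem : ∀ x : Fin n, 2 ≤ degree E x → x ∈ e → x = w ∨ x = w' := by
    intro x hx2 hxe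
    have hsub : ({w, w'} : Finset (Fin n)) ⊆ Dv E e := by
      intro y hy
      rw [Finset.mem_insert, Finset.mem_singleton] at hy
      rcases hy with h | h <;> subst h <;> exact mem_filter.2 ⟨by assumption, by omega⟩
    have hcard : (Dv E e).card = 2 := by
      apply Dv_card_eq_two E hu hb hs
      exact mem_filter.2 ⟨he, hnse⟩
    have heq : Dv E e = {w, w'} :=
      (Finset.eq_of_subset_of_card_le hsub (by rw [Finset.card_pair hww]; omega)).symm
    have : x ∈ Dv E e := mem_filter.2 ⟨hxe, hx2⟩
    rw [heq, Finset.mem_insert, Finset.mem_singleton] at this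
    exact this
  have hnsf : ¬ SpecialEdge E f := nonspecial_of_W E hwW hwf
  have hWmemf : ∀ x : Fin n, 2 ≤ degree E x → x ∈ f → x = w ∨ x = w' := by
    intro x hx2 hxf
    have hsub : ({w, w'} : Finset (Fin n)) ⊆ Dv E f := by
      intro y hy
      rw [Finset.mem_insert, Finset.mem_singleton] at hy
      rcases hy with h | h <;> subst h <;> exact mem_filter.2 ⟨by assumption, by omega⟩
    have hcard : (Dv E f).card = 2 := by
      apply Dv_card_eq_two E hu hb hs
      exact mem_filter.2 ⟨hf, hnsf⟩
    have heq : Dv E f = {w, w'} :=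
      (Finset.eq_of_subset_of_card_le hsub (by rw [Finset.card_pair hww]; omega)).symm
    have : x ∈ Dv E f := mem_filter.2 ⟨hxf, hx2⟩
    rw [heq, Finset.mem_insert, Finset.mem_singleton] at this
    exact this
  have hedw := edges_of_W E hwW hef he hf hwe hwf
  have hedw' := edges_of_W E hw'W hef he hf hw'e hw'f
  have key : ∀ x : Fin n, (x ∈ e ∨ x ∈ f) → ∀ g ∈ E, x ∈ g → g = e ∨ g = f := by
    intro x hx g hg hxg
    by_cases h2 : 2 ≤ degree E x
    · have hxww' : x = w ∨ x = w' := by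
        rcases hx with h | h
        · exact hWmem x h2 h
        · exact hWmemf x h2 h
      have : g ∈ E.filter (fun g => x ∈ g) := mem_filter.2 ⟨hg, hxg⟩
      rcases hxww' with h | h <;> subst h
      · rw [hedw, Finset.mem_insert, Finset.mem_singleton] at this; exact this
      · rw [hedw', Finset.mem_insert, Finset.mem_singleton] at this; exact this
    · -- degree ≤ 1, so the unique edge containing x is e (or f)
      rcases hx with h | h
      · left
        by_contra hge
        have hsub : ({g, e} : Finset (Finset (Fin n))) ⊆ E.filter (fun g => x ∈ g) := by
          intro y hy
          rw [Finset.mem_insert, Finset.mem_singleton] at hy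
          rcases hy with hh | hh <;> subst hh <;> exact mem_filter.2 ⟨by assumption, by assumption⟩
        have := Finset.card_le_card hsub
        rw [Finset.card_pair hge] at this
        exact h2 this
      · right
        by_contra hgf
        have hsub : ({g, f} : Finset (Finset (Fin n))) ⊆ E.filter (fun g => x ∈ g) := by
          intro y hy
          rw [Finset.mem_insert, Finset.mem_singleton] at hy
          rcases hy with hh | hh <;> subst hh <;> exact mem_filter.2 ⟨by assumption, by assumption⟩
        have := Finset.card_le_card hsub
        rw [Finset.card_pair hgf] at this
        exact h2 this
  have hclosed : ∀ x : Fin n, x ∈ e ∨ x ∈ f := by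
    intro x
    have hconn := hc w x
    induction hconn with
    | refl => exact Or.inl hwe
    | tail hR hlink ih =>
      obtain ⟨g, hg, hyg, hxg⟩ := hlink
      rcases key _ ih g hg hyg with h | h <;> subst h
      · exact Or.inl hxg
      · exact Or.inr hxg
  have hEef : E = {e, f} := by
    apply Finset.Subset.antisymm
    · intro g hg
      have hgne : g.Nonempty := by
        rw [← Finset.card_pos, hu g hg]; omega
      obtain ⟨x, hx⟩ := hgne
      have := key x (hclosed x) g hg hx
      rw [Finset.mem_insert, Finset.mem_singleton]
      exact this
    · intro g hg
      rw [Finset.mem_insert, Finset.mem_singleton] at hg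
      rcases hg with h | h <;> subst h <;> assumption
  have hinter : e ∩ f = {w, w'} := by
    apply Finset.Subset.antisymm
    · intro x hx
      rw [Finset.mem_inter] at hx
      have h2 : 2 ≤ degree E x := by
        have hsub : ({e, f} : Finset (Finset (Fin n))) ⊆ E.filter (fun g => x ∈ g) := by
          intro y hy
          rw [Finset.mem_insert, Finset.mem_singleton] at hy
          rcases hy with hh | hh <;> subst hh
          · exact mem_filter.2 ⟨he, hx.1⟩
          · exact mem_filter.2 ⟨hf, hx.2⟩
        have := Finset.card_le_card hsub
        rw [Finset.card_pair hef] at this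
        exact this
      rcases hWmem x h2 hx.1 with h | h <;> subst h <;> simp
    · intro x hx
      rw [Finset.mem_insert, Finset.mem_singleton] at hx
      rcases hx with h | h <;> subst h <;> exact Finset.mem_inter.2 ⟨by assumption, by assumption⟩
  have hcard_union : (e ∪ f).card + 2 = b + b := by
    have := Finset.card_union_add_card_inter e f
    rw [hinter, Finset.card_pair hww, hu e he, hu f hf] at this
    omega
  have hn : (e ∪ f).card ≤ n := by
    calc (e ∪ f).card ≤ (univ : Finset (Fin n)).card := Finset.card_le_univ _
      _ = n := by simp
  have hE2 : E.card = 2 := by rw [hEef, Finset.card_pair hef]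
  rw [hE2] at hx
  have hnn : 2 * b ≤ n + 2 := by omega
  have hz : (2 : ℤ) * b ≤ (n : ℤ) + 2 := by exact_mod_cast hnn
  have hl1 : (1 : ℤ) ≤ (ℓ : ℤ) := by exact_mod_cast hℓ
  push_cast at hx
  linarith
end Main3
end ChainsAux
namespace ChainsAux
section Main4
variable {n b ℓ : ℕ} (E : Finset (Finset (Fin n)))

/-- the chain class of an edge -/
def cls (e : Finset (Fin n)) : Set (Finset (Fin n)) :=
  {f | Relation.ReflTransGen (chainLink E) e f}

lemma chainLink_symm {e f : Finset (Fin n)} (h : chainLink E e f) : chainLink E f e := by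
  obtain ⟨he, hf, hse, hsf, v, hv1, hv2, hv3, hv4⟩ := h
  exact ⟨hf, he, hsf, hse, v, hv2, hv1, hv3, hv4⟩

lemma cls_eq_of_link {e f : Finset (Fin n)} (h : chainLink E e f) : cls E e = cls E f := by
  ext g
  constructor
  · intro hg
    exact (Relation.ReflTransGen.single (chainLink_symm E h)).trans hg
  · intro hg
    exact (Relation.ReflTransGen.single h).trans hg

lemma mem_cls_self (e : Finset (Fin n)) : e ∈ cls E e := Relation.ReflTransGen.refl

lemma cls_eq_of_mem {e f : Finset (Fin n)} (h : f ∈ cls E e) : cls E e = cls E f := by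
  induction h with
  | refl => rfl
  | tail _hR hlink ih => exact ih.trans (cls_eq_of_link E hlink)

lemma cls_subset (e : Finset (Fin n)) : cls E e ⊆ insert e (↑E : Set (Finset (Fin n))) := by
  intro g hg
  rcases (Relation.ReflTransGen.cases_tail hg) with h | ⟨u, _, hl⟩
  · rw [h]; exact Set.mem_insert _ _
  · exact Set.mem_insert_of_mem _ hl.2.1

lemma cls_finite (e : Finset (Fin n)) : (cls E e).Finite :=
  Set.Finite.subset (Set.Finite.insert e (Finset.finite_toSet E)) (cls_subset E e)

lemma numChains_eq : numChains E = ((Ens E).image (cls E)).card := by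
  rw [numChains, ← Set.ncard_coe_finset]
  congr 1
  ext C
  simp only [Finset.coe_image, Set.mem_image, Finset.mem_coe, Ens, mem_filter,
    Set.mem_setOf_eq]
  constructor
  · rintro ⟨e, he, hns, rfl⟩
    exact ⟨e, ⟨he, hns⟩, rfl⟩
  · rintro ⟨e, ⟨he, hns⟩, rfl⟩
    exact ⟨e, he, hns, rfl⟩

/-- fiber bound from `Basic` -/
lemma fib_le_two (hba : Basic E) {c : Set (Finset (Fin n))}
    (hc : c ∈ (Ens E).image (cls E)) :
    ((Ens E).filter (fun e => cls E e = c)).card ≤ 2 := by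
  obtain ⟨e₀, he₀, rfl⟩ := Finset.mem_image.1 hc
  have he₀' := mem_filter.1 he₀
  have hsub : (((Ens E).filter (fun e => cls E e = cls E e₀)) : Set (Finset (Fin n)))
      ⊆ cls E e₀ := by
    intro f hf
    rw [Finset.mem_coe, mem_filter] at hf
    rw [← hf.2]
    exact mem_cls_self E f
  calc ((Ens E).filter (fun e => cls E e = cls E e₀)).card
      = (((Ens E).filter (fun e => cls E e = cls E e₀)) : Set (Finset (Fin n))).ncard := by
        rw [Set.ncard_coe_finset]
    _ ≤ (cls E e₀).ncard := Set.ncard_le_ncard hsub (cls_finite E e₀)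
    _ ≤ 2 := hba e₀ he₀'.1 he₀'.2

/-- a choice of edge containing a vertex -/
noncomputable def wedge (w : Fin n) : Finset (Fin n) :=
  if h : ∃ e, e ∈ E ∧ w ∈ e then h.choose else ∅

lemma wedge_spec {w : Fin n} (hw : 1 ≤ degree E w) : wedge E w ∈ E ∧ w ∈ wedge E w := by
  have : ∃ e, e ∈ E ∧ w ∈ e := by
    obtain ⟨e, he⟩ := Finset.card_pos.1 hw
    rw [mem_filter] at he
    exact ⟨e, he.1, he.2⟩
  rw [wedge, dif_pos this]
  exact this.choose_spec

lemma cls_of_W {w : Fin n} (hw : w ∈ Wns E) {e f : Finset (Fin n)}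
    (he : e ∈ E) (hf : f ∈ E) (hwe : w ∈ e) (hwf : w ∈ f) : cls E e = cls E f := by
  rcases eq_or_ne e f with h | h
  · rw [h]
  · exact cls_eq_of_link E ⟨he, hf, nonspecial_of_W E hw hwe, nonspecial_of_W E hw hwf,
      w, hwe, hwf, (W_deg_two E hw).1, (W_deg_two E hw).2⟩

/-- the class of a W-vertex -/
noncomputable def wcls (w : Fin n) : Set (Finset (Fin n)) := cls E (wedge E w)

lemma wcls_eq {w : Fin n} (hw : w ∈ Wns E) {e : Finset (Fin n)} (he : e ∈ E) (hwe : w ∈ e) :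
    wcls E w = cls E e := by
  have hdeg : 1 ≤ degree E w := by
    have := (W_deg_two E hw).1; omega
  obtain ⟨h1, h2⟩ := wedge_spec E hdeg
  exact cls_of_W E hw h1 he h2 hwe

lemma wcls_mem {w : Fin n} (hw : w ∈ Wns E) : wcls E w ∈ (Ens E).image (cls E) := by
  have hdeg : 1 ≤ degree E w := by
    have := (W_deg_two E hw).1; omega
  obtain ⟨h1, h2⟩ := wedge_spec E hdeg
  exact Finset.mem_image.2 ⟨wedge E w, mem_filter.2 ⟨h1, nonspecial_of_W E hw h2⟩, rfl⟩

/-- the two distinct edges through a W-vertex -/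
lemma W_two_edges {w : Fin n} (hw : w ∈ Wns E) :
    ∃ e f, e ≠ f ∧ e ∈ E ∧ f ∈ E ∧ w ∈ e ∧ w ∈ f := by
  have hdeg : (E.filter (fun g => w ∈ g)).card = 2 := (W_deg_two E hw).1
  obtain ⟨e, f, hef, hset⟩ := Finset.card_eq_two.1 hdeg
  have he : e ∈ E.filter (fun g => w ∈ g) := by rw [hset]; simp
  have hf : f ∈ E.filter (fun g => w ∈ g) := by rw [hset]; simp
  rw [mem_filter] at he hf
  exact ⟨e, f, hef, he.1, hf.1, he.2, hf.2⟩

/-- each fiber has exactly one more edge than it has W-vertices -/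
lemma fib_card (hu : Uniform b E) (hb : 2 ≤ b) (hs : SmoothHG b E) (hc : Connected E)
    (hba : Basic E) (hℓ : 1 ≤ ℓ) (hx : ((b : ℤ) - 1) * E.card = (n : ℤ) + ℓ)
    {c : Set (Finset (Fin n))} (hcmem : c ∈ (Ens E).image (cls E)) :
    ((Ens E).filter (fun e => cls E e = c)).card
      = ((Wns E).filter (fun w => wcls E w = c)).card + 1 := by
  have hle2 := fib_le_two E hba hcmem
  have hge1 : 1 ≤ ((Ens E).filter (fun e => cls E e = c)).card := by
    obtain ⟨e₀, he₀, rfl⟩ := Finset.mem_image.1 hcmem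
    exact Finset.card_pos.2 ⟨e₀, mem_filter.2 ⟨he₀, rfl⟩⟩
  -- every W-vertex of the fiber puts both of its edges in the fiber
  have hWboth : ∀ w ∈ (Wns E).filter (fun w => wcls E w = c),
      ∃ e f, e ≠ f ∧ e ∈ (Ens E).filter (fun e => cls E e = c)
        ∧ f ∈ (Ens E).filter (fun e => cls E e = c) ∧ w ∈ e ∧ w ∈ f := by
    intro w hwmem
    rw [mem_filter] at hwmem
    obtain ⟨hwW, hwc⟩ := hwmem
    obtain ⟨e, f, hef, he, hf, hwe, hwf⟩ := W_two_edges E hwW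
    refine ⟨e, f, hef, ?_, ?_, hwe, hwf⟩
    · refine mem_filter.2 ⟨mem_filter.2 ⟨he, nonspecial_of_W E hwW hwe⟩, ?_⟩
      rw [← wcls_eq E hwW he hwe]; exact hwc
    · refine mem_filter.2 ⟨mem_filter.2 ⟨hf, nonspecial_of_W E hwW hwf⟩, ?_⟩
      rw [← wcls_eq E hwW hf hwf]; exact hwc
  interval_cases hfc : ((Ens E).filter (fun e => cls E e = c)).card
  · -- fiber has one edge: no W-vertices
    obtain ⟨e₀, hfib⟩ := Finset.card_eq_one.1 hfc
    suffices h : (Wns E).filter (fun w => wcls E w = c) = ∅ by rw [h]; simp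
    rw [Finset.eq_empty_iff_forall_notMem]
    intro w hw
    obtain ⟨e, f, hef, he, hf, _, _⟩ := hWboth w hw
    rw [hfib, Finset.mem_singleton] at he hf
    exact hef (he.trans hf.symm)
  · -- fiber has two edges: exactly one W-vertex
    obtain ⟨e, f, hef, hfib⟩ := Finset.card_eq_two.1 hfc
    have hemem : e ∈ (Ens E).filter (fun e => cls E e = c) := by rw [hfib]; simp
    have hfmem : f ∈ (Ens E).filter (fun e => cls E e = c) := by rw [hfib]; simp
    rw [mem_filter] at hemem hfmem
    have heE : e ∈ E ∧ ¬ SpecialEdge E e := by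
      have := hemem.1; rw [Ens, mem_filter] at this; exact this
    have hfE : f ∈ E ∧ ¬ SpecialEdge E f := by
      have := hfmem.1; rw [Ens, mem_filter] at this; exact this
    -- lower bound: a linking vertex exists
    have hge : ∃ w ∈ Wns E, wcls E w = c := by
      have hfcls : f ∈ cls E e := by
        rw [hemem.2, ← hfmem.2]; exact mem_cls_self E f
      rcases Relation.ReflTransGen.cases_head hfcls with h | ⟨g, hlink, _⟩
      · exact absurd h hef
      · obtain ⟨_, _, _, _, v, hv1, hv2, hv3, hv4⟩ := hlink
        have hvW : v ∈ Wns E := by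
          rw [Wns, mem_filter]
          exact ⟨Finset.mem_univ v, hv4, by omega⟩
        refine ⟨v, hvW, ?_⟩
        rw [wcls_eq E hvW heE.1 hv1]
        exact hemem.2
    -- upper bound: at most one W-vertex
    have hle : ∀ w ∈ (Wns E).filter (fun w => wcls E w = c),
        ∀ w' ∈ (Wns E).filter (fun w => wcls E w = c), w = w' := by
      intro w hw w' hw'
      by_contra hww
      have hwin : ∀ u ∈ (Wns E).filter (fun w => wcls E w = c), u ∈ e ∧ u ∈ f := by
        intro u hu
        obtain ⟨g1, g2, hg12, hg1, hg2, hug1, hug2⟩ := hWboth u hu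
        rw [hfib] at hg1 hg2
        rw [Finset.mem_insert, Finset.mem_singleton] at hg1 hg2
        rcases hg1 with h1 | h1 <;> rcases hg2 with h2 | h2 <;>
          first
          | (exfalso; exact hg12 (h1.trans h2.symm))
          | (subst h1; subst h2; exact ⟨by assumption, by assumption⟩)
          | (subst h1; subst h2; exact ⟨by assumption, by assumption⟩)
      obtain ⟨hwe, hwf⟩ := hwin w hw
      obtain ⟨hw'e, hw'f⟩ := hwin w' hw'
      have hwW := (mem_filter.1 hw).1
      have hw'W := (mem_filter.1 hw').1
      exact exclusion E hu hb hs hc hℓ hx hww hwW hw'W hef heE.1 hfE.1 hwe hwf hw'e hw'f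
    have hcard : ((Wns E).filter (fun w => wcls E w = c)).card = 1 := by
      obtain ⟨w, hwmem, hwc⟩ := hge
      have hwin : w ∈ (Wns E).filter (fun w => wcls E w = c) := mem_filter.2 ⟨hwmem, hwc⟩
      rw [Finset.card_eq_one]
      exact ⟨w, Finset.eq_singleton_iff_unique_mem.2 ⟨hwin, fun u hu => hle u hu w hwin⟩⟩
    omega

/-- the partition count: `numChains + |W| = |Ens|`. -/
lemma chains_count (hu : Uniform b E) (hb : 2 ≤ b) (hs : SmoothHG b E) (hc : Connected E)
    (hba : Basic E) (hℓ : 1 ≤ ℓ) (hx : ((b : ℤ) - 1) * E.card = (n : ℤ) + ℓ) :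
    numChains E + (Wns E).card = (Ens E).card := by
  rw [numChains_eq]
  have h1 : (Ens E).card = ∑ c ∈ (Ens E).image (cls E),
      ((Ens E).filter (fun e => cls E e = c)).card :=
    Finset.card_eq_sum_card_image (cls E) (Ens E)
  have h2 : (Wns E).card = ∑ c ∈ (Ens E).image (cls E),
      ((Wns E).filter (fun w => wcls E w = c)).card :=
    Finset.card_eq_sum_card_fiberwise (fun w hw => wcls_mem E hw)
  rw [h1, h2, Finset.card_eq_sum_ones ((Ens E).image (cls E)), ← Finset.sum_add_distrib]
  apply Finset.sum_congr rfl
  intro c hcmem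
  rw [fib_card E hu hb hs hc hba hℓ hx hcmem]
  omega
end Main4
end ChainsAux
namespace ChainsAux
section Main5
variable {n b ℓ : ℕ} (E : Finset (Finset (Fin n)))

lemma pervertex (v : Fin n) (hv : v ∈ S2 E) : 3 ≤ degns E v + 2 * degs E v := by
  rw [S2, mem_filter] at hv
  obtain ⟨_, hsp, hdeg⟩ := hv
  have hsplit := deg_split E v
  rcases Nat.lt_or_ge (degs E v) 1 with h0 | h1
  · -- no special edge contains v, so degree ≥ 3
    have h3 : 3 ≤ degree E v := by
      rcases hsp with ⟨e, he, hve⟩ | h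
      · exfalso
        have : e ∈ (Es E).filter (fun e => v ∈ e) :=
          mem_filter.2 ⟨mem_filter.2 ⟨he.1, he⟩, hve⟩
        have := Finset.card_pos.2 ⟨e, this⟩
        rw [degs] at h0
        omega
      · exact h
    omega
  · omega

lemma sum_pervertex : 3 * (S2 E).card ≤ ∑ v ∈ S2 E, degns E v + 2 * ∑ v ∈ S2 E, degs E v := by
  have h : ∀ v ∈ S2 E, 3 ≤ degns E v + 2 * degs E v := pervertex E
  calc 3 * (S2 E).card = ∑ _v ∈ S2 E, 3 := by simp [mul_comm]
    _ ≤ ∑ v ∈ S2 E, (degns E v + 2 * degs E v) := Finset.sum_le_sum h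
    _ = _ := by rw [Finset.sum_add_distrib, Finset.mul_sum]

/-- the master theorem: exact chain count and the bound -/
theorem master (hu : Uniform b E) (hb : 2 ≤ b) (hs : SmoothHG b E) (hc : Connected E)
    (hba : Basic E) (hℓ : 1 ≤ ℓ) (hx : ((b : ℤ) - 1) * E.card = (n : ℤ) + ℓ) :
    (numChains E : ℤ)
      = (ℓ : ℤ) + (S2 E).card + (Es E).card - ∑ v ∈ S2 E, degs E v
    ∧ numChains E ≤ 3 * ℓ := by
  have hid := master_identity E hu hb hs hc hℓ hx
  have hcount := chains_count E hu hb hs hc hba hℓ hx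
  have hK := sum_pervertex E
  have hF4 := sum_degns_S2 E
  have hF4' := sum_degns E hu hb hs
  have hF5 : 3 * (Es E).card ≤ ∑ v ∈ S2 E, degs E v := by
    rw [sum_degs_S2]; exact sum_degs_ge E
  -- cast everything to ℤ
  have c1 : (numChains E : ℤ) + (Wns E).card = (Ens E).card := by exact_mod_cast hcount
  have c2 : 3 * ((S2 E).card : ℤ) ≤ (∑ v ∈ S2 E, degns E v : ℕ)
      + 2 * ((∑ v ∈ S2 E, degs E v : ℕ) : ℤ) := by exact_mod_cast hK
  have c3 : ((∑ v ∈ S2 E, degns E v : ℕ) : ℤ) + 2 * (Wns E).card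
      = 2 * (Ens E).card := by
    have : ∑ v ∈ S2 E, degns E v + 2 * (Wns E).card = 2 * (Ens E).card := by
      rw [hF4, hF4']
    exact_mod_cast this
  have c5 : 3 * ((Es E).card : ℤ) ≤ ((∑ v ∈ S2 E, degs E v : ℕ) : ℤ) := by exact_mod_cast hF5
  constructor
  · linarith [hid, c1]
  · have : (numChains E : ℤ) ≤ 3 * ℓ := by linarith [hid, c1]
    exact_mod_cast this

end Main5
end ChainsAux
namespace ChainsAux
section Transfer
variable {V : Type*} [DecidableEq V] [Fintype V] {n : ℕ} (σ : V ≃ Fin n)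
  (E0 : Finset (Finset V))

/-- v-side degree -/
noncomputable def vdeg (v : V) : ℕ := (E0.filter (fun e => v ∈ e)).card
/-- v-side special edge -/
noncomputable def vSpE (e : Finset V) : Prop :=
  e ∈ E0 ∧ 3 ≤ (e.filter (fun v => 2 ≤ vdeg E0 v)).card
/-- v-side special vertex -/
noncomputable def vSpV (v : V) : Prop :=
  (∃ e, vSpE E0 e ∧ v ∈ e) ∨ 3 ≤ vdeg E0 v
/-- v-side chain link -/
noncomputable def vCL (e f : Finset V) : Prop :=
  e ∈ E0 ∧ f ∈ E0 ∧ ¬ vSpE E0 e ∧ ¬ vSpE E0 f ∧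
    ∃ v, v ∈ e ∧ v ∈ f ∧ vdeg E0 v = 2 ∧ ¬ vSpV E0 v

/-- transported hypergraph -/
noncomputable def tr : Finset (Finset (Fin n)) :=
  E0.image (fun e => e.map σ.toEmbedding)

lemma mem_tr {f : Finset (Fin n)} :
    f ∈ tr σ E0 ↔ ∃ e ∈ E0, e.map σ.toEmbedding = f := Finset.mem_image

lemma map_mem_tr {e : Finset V} : e.map σ.toEmbedding ∈ tr σ E0 ↔ e ∈ E0 := by
  rw [mem_tr]
  constructor
  · rintro ⟨e', he', heq⟩
    rwa [Finset.map_injective σ.toEmbedding heq] at he'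
  · intro h; exact ⟨e, h, rfl⟩

lemma map_filter_eq (e : Finset V) (P : Fin n → Prop) [DecidablePred P]
    [DecidablePred (fun v => P (σ v))] :
    (e.map σ.toEmbedding).filter P = (e.filter (fun v => P (σ v))).map σ.toEmbedding := by
  ext x
  simp only [Finset.mem_filter, Finset.mem_map, Equiv.coe_toEmbedding]
  constructor
  · rintro ⟨⟨v, hv, rfl⟩, hP⟩
    exact ⟨v, ⟨hv, hP⟩, rfl⟩
  · rintro ⟨v, ⟨hv, hP⟩, rfl⟩
    exact ⟨⟨v, hv, rfl⟩, hP⟩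

lemma degree_tr (v : V) : degree (tr σ E0) (σ v) = vdeg E0 v := by
  rw [degree, vdeg, tr]
  rw [Finset.filter_image]
  rw [Finset.card_image_of_injective _ (Finset.map_injective σ.toEmbedding)]
  congr 1
  apply Finset.filter_congr
  intro e _
  simp [Finset.mem_map, Equiv.coe_toEmbedding]

lemma spE_tr (e : Finset V) : SpecialEdge (tr σ E0) (e.map σ.toEmbedding) ↔ vSpE E0 e := by
  rw [SpecialEdge, vSpE, map_mem_tr]
  refine and_congr_right fun _ => ?_
  rw [map_filter_eq σ e (fun x => 2 ≤ degree (tr σ E0) x), Finset.card_map]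
  have heq : e.filter (fun v => 2 ≤ degree (tr σ E0) (σ v))
      = e.filter (fun v => 2 ≤ vdeg E0 v) := by
    apply Finset.filter_congr
    intro v _
    rw [degree_tr]
  rw [heq]

lemma spE_tr' {f : Finset (Fin n)} (h : SpecialEdge (tr σ E0) f) :
    ∃ e ∈ E0, f = e.map σ.toEmbedding ∧ vSpE E0 e := by
  obtain ⟨e, he, rfl⟩ := (mem_tr σ E0).1 h.1
  exact ⟨e, he, rfl, (spE_tr σ E0 e).1 h⟩

lemma spV_tr (v : V) : SpecialVtx (tr σ E0) (σ v) ↔ vSpV E0 v := by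
  rw [SpecialVtx, vSpV, degree_tr]
  refine or_congr ?_ Iff.rfl
  constructor
  · rintro ⟨f, hf, hv⟩
    obtain ⟨e, he, rfl, hsp⟩ := spE_tr' σ E0 hf
    exact ⟨e, hsp, (Finset.mem_map' σ.toEmbedding).1 hv⟩
  · rintro ⟨e, he, hv⟩
    exact ⟨e.map σ.toEmbedding, (spE_tr σ E0 e).2 he, Finset.mem_map_of_mem _ hv⟩

lemma cl_tr {e f : Finset V} :
    chainLink (tr σ E0) (e.map σ.toEmbedding) (f.map σ.toEmbedding) ↔ vCL E0 e f := by
  rw [chainLink, vCL, map_mem_tr, map_mem_tr, spE_tr, spE_tr]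
  refine and_congr_right fun _ => and_congr_right fun _ => and_congr_right fun _ =>
    and_congr_right fun _ => ?_
  constructor
  · rintro ⟨x, hx1, hx2, hx3, hx4⟩
    obtain ⟨v, hv, rfl⟩ := Finset.mem_map.1 hx1
    refine ⟨v, hv, (Finset.mem_map' σ.toEmbedding).1 hx2, ?_, ?_⟩
    · rw [show (σ.toEmbedding v : Fin n) = σ v from rfl, degree_tr] at hx3; exact hx3
    · rw [show (σ.toEmbedding v : Fin n) = σ v from rfl, spV_tr] at hx4; exact hx4
  · rintro ⟨v, hv1, hv2, hv3, hv4⟩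
    refine ⟨σ v, Finset.mem_map_of_mem _ hv1, Finset.mem_map_of_mem _ hv2, ?_, ?_⟩
    · rw [degree_tr]; exact hv3
    · rw [spV_tr]; exact hv4

lemma cl_tr_back {f g : Finset (Fin n)} (h : chainLink (tr σ E0) f g) :
    ∃ e e', e ∈ E0 ∧ e' ∈ E0 ∧ f = e.map σ.toEmbedding ∧ g = e'.map σ.toEmbedding
      ∧ vCL E0 e e' := by
  obtain ⟨e, he, rfl⟩ := (mem_tr σ E0).1 h.1
  obtain ⟨e', he', rfl⟩ := (mem_tr σ E0).1 h.2.1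
  exact ⟨e, e', he, he', rfl, rfl, (cl_tr σ E0).1 h⟩

lemma uniform_tr {b : ℕ} (h : ∀ e ∈ E0, e.card = b) : Uniform b (tr σ E0) := by
  intro f hf
  obtain ⟨e, he, rfl⟩ := (mem_tr σ E0).1 hf
  rw [Finset.card_map]
  exact h e he

lemma connected_tr (h : ∀ x y : V, Relation.ReflTransGen
    (fun x y => ∃ e ∈ E0, x ∈ e ∧ y ∈ e) x y) : Connected (tr σ E0) := by
  intro x y
  have hx := σ.surjective x
  have hy := σ.surjective y
  obtain ⟨u, rfl⟩ := hx
  obtain ⟨v, rfl⟩ := hy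
  refine Relation.ReflTransGen.lift σ ?_ u v (h u v)
  rintro a c ⟨e, he, ha, hc⟩
  exact ⟨e.map σ.toEmbedding, (map_mem_tr σ E0).2 he,
    Finset.mem_map_of_mem _ ha, Finset.mem_map_of_mem _ hc⟩

lemma smooth_tr {b : ℕ}
    (h : ¬ ∃ e ∈ E0, ∃ S ⊆ e, S.card = b - 1 ∧ ∀ v ∈ S, vdeg E0 v = 1) :
    SmoothHG b (tr σ E0) := by
  rintro ⟨f, hf, S, hS, hcard, hdeg⟩
  obtain ⟨e, he, rfl⟩ := (mem_tr σ E0).1 hf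
  refine h ⟨e, he, e.filter (fun v => σ v ∈ S), Finset.filter_subset _ _, ?_, ?_⟩
  · have : S = (e.filter (fun v => σ v ∈ S)).map σ.toEmbedding := by
      ext x
      simp only [Finset.mem_map, Finset.mem_filter, Equiv.coe_toEmbedding]
      constructor
      · intro hx
        obtain ⟨v, hv, rfl⟩ := Finset.mem_map.1 (hS hx)
        exact ⟨v, ⟨hv, hx⟩, rfl⟩
      · rintro ⟨v, ⟨_, hv⟩, rfl⟩
        exact hv
    have h2 := congrArg Finset.card this
    rw [Finset.card_map] at h2
    rw [← h2, hcard]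
  · intro v hv
    rw [Finset.mem_filter] at hv
    rw [← degree_tr σ E0]
    exact hdeg _ hv.2

lemma card_tr : (tr σ E0).card = E0.card :=
  Finset.card_image_of_injective E0 (Finset.map_injective σ.toEmbedding)

lemma S2_tr : (S2 (tr σ E0)).card
    = ((univ : Finset V).filter (fun v => vSpV E0 v ∧ 2 ≤ vdeg E0 v)).card := by
  rw [S2]
  have huniv : (univ : Finset (Fin n)) = (univ : Finset V).map σ.toEmbedding :=
    (Finset.map_univ_equiv σ).symm
  rw [huniv, map_filter_eq, Finset.card_map]
  congr 1
  apply Finset.filter_congr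
  intro v _
  rw [spV_tr, degree_tr]

lemma Es_tr (h : ∀ e ∈ E0, ¬ vSpE E0 e) : Es (tr σ E0) = ∅ := by
  rw [Es, Finset.filter_eq_empty_iff]
  intro f hf hsp
  obtain ⟨e, he, rfl, hsp'⟩ := spE_tr' σ E0 hsp
  exact h e he hsp'

lemma basic_tr
    (h : ∀ e ∈ E0, ∃ A C : Finset V, ∀ g, Relation.ReflTransGen (vCL E0) e g →
      g = A ∨ g = C) : Basic (tr σ E0) := by
  intro f hf _
  obtain ⟨e, he, rfl⟩ := (mem_tr σ E0).1 hf
  obtain ⟨A, C, hAC⟩ := h e he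
  have hsub : {g | Relation.ReflTransGen (chainLink (tr σ E0)) (e.map σ.toEmbedding) g}
      ⊆ {A.map σ.toEmbedding, C.map σ.toEmbedding} := by
    intro g hg
    have : ∃ g0, g = g0.map σ.toEmbedding ∧ Relation.ReflTransGen (vCL E0) e g0 := by
      clear hf
      induction hg with
      | refl => exact ⟨e, rfl, Relation.ReflTransGen.refl⟩
      | tail _hR hlink ih =>
        obtain ⟨g0, rfl, hg0⟩ := ih
        obtain ⟨e1, e2, _, _, heq1, heq2, hcl⟩ := cl_tr_back σ E0 hlink
        have hge : g0 = e1 := Finset.map_injective σ.toEmbedding heq1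
        subst hge
        exact ⟨e2, heq2, hg0.tail hcl⟩
    obtain ⟨g0, rfl, hg0⟩ := this
    rcases hAC g0 hg0 with h | h <;> subst h
    · exact Set.mem_insert _ _
    · exact Set.mem_insert_of_mem _ rfl
  calc ({g | Relation.ReflTransGen (chainLink (tr σ E0)) (e.map σ.toEmbedding) g}).ncard
      ≤ ({A.map σ.toEmbedding, C.map σ.toEmbedding} : Set (Finset (Fin n))).ncard :=
        Set.ncard_le_ncard hsub ((Set.finite_singleton _).insert _)
    _ ≤ 2 := by
        apply le_trans (Set.ncard_insert_le _ _)
        simp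
end Transfer
end ChainsAux
namespace ChainsAux
namespace Constr

/-- vertex type: hubs ⊕ subdivision vertices ⊕ filler vertices -/
abbrev CV (L B : ℕ) := (Fin (2*L+2)) ⊕ ((Fin (3*L+3)) ⊕ ((Fin (3*L+3) × Bool) × Fin B))

variable (L B : ℕ)

/-- hub endpoint of the half of subdivided edge `j` on side `s` -/
def endpt (j : Fin (3*L+3)) (s : Bool) : Fin (2*L+2) :=
  if h : (j : ℕ) < 2*L+2 then
    (if s then (if h2 : (j : ℕ) = 2*L+1 then ⟨0, by omega⟩ else ⟨(j:ℕ)+1, by omega⟩)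
     else ⟨(j:ℕ), h⟩)
  else
    (if s then ⟨2*((j:ℕ)-(2*L+2))+1, by have hj := j.isLt; omega⟩
     else ⟨2*((j:ℕ)-(2*L+2)), by have hj := j.isLt; omega⟩)

lemma endpt_spec (j : Fin (3*L+3)) (s : Bool) :
    ((j:ℕ) < 2*L+2 ∧ s = false ∧ ((endpt L j s : Fin (2*L+2)) : ℕ) = j) ∨
    ((j:ℕ) < 2*L+1 ∧ s = true ∧ ((endpt L j s : Fin (2*L+2)) : ℕ) = (j:ℕ)+1) ∨
    ((j:ℕ) = 2*L+1 ∧ s = true ∧ ((endpt L j s : Fin (2*L+2)) : ℕ) = 0) ∨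
    (2*L+2 ≤ (j:ℕ) ∧ s = false ∧ ((endpt L j s : Fin (2*L+2)) : ℕ) = 2*((j:ℕ)-(2*L+2))) ∨
    (2*L+2 ≤ (j:ℕ) ∧ s = true ∧ ((endpt L j s : Fin (2*L+2)) : ℕ) = 2*((j:ℕ)-(2*L+2))+1) := by
  by_cases h1 : (j:ℕ) < 2*L+2
  · cases s
    · rw [endpt, dif_pos h1, if_neg Bool.false_ne_true]
      exact Or.inl ⟨h1, rfl, rfl⟩
    · by_cases h2 : (j:ℕ) = 2*L+1
      · rw [endpt, dif_pos h1, if_pos rfl, dif_pos h2]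
        exact Or.inr (Or.inr (Or.inl ⟨h2, rfl, rfl⟩))
      · rw [endpt, dif_pos h1, if_pos rfl, dif_neg h2]
        exact Or.inr (Or.inl ⟨by omega, rfl, rfl⟩)
  · cases s
    · rw [endpt, dif_neg h1, if_neg Bool.false_ne_true]
      exact Or.inr (Or.inr (Or.inr (Or.inl ⟨by omega, rfl, rfl⟩)))
    · rw [endpt, dif_neg h1, if_pos rfl]
      exact Or.inr (Or.inr (Or.inr (Or.inr ⟨by omega, rfl, rfl⟩)))

lemma endpt_ne (j : Fin (3*L+3)) : endpt L j false ≠ endpt L j true := by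
  intro h
  rw [Fin.ext_iff] at h
  rcases endpt_spec L j false with ⟨_,_,h1⟩|⟨_,hc,_⟩|⟨_,hc,_⟩|⟨_,_,h1⟩|⟨_,hc,_⟩ <;>
    try exact absurd hc (by simp)
  all_goals (
    rcases endpt_spec L j true with ⟨_,hc,_⟩|⟨_,_,h2⟩|⟨hj,_,h2⟩|⟨_,hc,_⟩|⟨_,_,h2⟩ <;>
      try exact absurd hc (by simp))
  all_goals omega

/-- the filler vertices of a hyperedge -/
def fillers (j : Fin (3*L+3)) (s : Bool) : Finset (CV L B) :=
  (Finset.univ : Finset (Fin B)).image (fun r => Sum.inr (Sum.inr ((j,s),r)))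

/-- a hyperedge of the construction -/
def cedge (j : Fin (3*L+3)) (s : Bool) : Finset (CV L B) :=
  insert (Sum.inl (endpt L j s)) (insert (Sum.inr (Sum.inl j)) (fillers L B j s))

/-- the edge set of the construction -/
def CE : Finset (Finset (CV L B)) :=
  (Finset.univ : Finset (Fin (3*L+3) × Bool)).image (fun p => cedge L B p.1 p.2)

lemma mem_fillers {x : CV L B} {j s} :
    x ∈ fillers L B j s ↔ ∃ r, x = Sum.inr (Sum.inr ((j,s),r)) := by
  simp [fillers, eq_comm]

lemma mem_cedge {x : CV L B} {j s} :
    x ∈ cedge L B j s ↔ x = Sum.inl (endpt L j s) ∨ x = Sum.inr (Sum.inl j) ∨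
      ∃ r, x = Sum.inr (Sum.inr ((j,s),r)) := by
  simp [cedge, mem_fillers]

lemma card_fillers (j s) : (fillers L B j s).card = B := by
  rw [fillers, Finset.card_image_of_injective, Finset.card_univ, Fintype.card_fin]
  intro a b h
  simpa using h

lemma card_cedge (j s) : (cedge L B j s).card = B + 2 := by
  rw [cedge]
  rw [Finset.card_insert_of_notMem (by simp [mem_fillers])]
  rw [Finset.card_insert_of_notMem (by simp [mem_fillers])]
  rw [card_fillers]

lemma cedge_inj : Function.Injective
    (fun p : Fin (3*L+3) × Bool => cedge L B p.1 p.2) := by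
  rintro ⟨j, s⟩ ⟨j', s'⟩ h
  simp only at h
  have hj : j = j' := by
    have hm : (Sum.inr (Sum.inl j) : CV L B) ∈ cedge L B j' s' := by
      rw [← h, mem_cedge]; tauto
    rw [mem_cedge] at hm
    rcases hm with hm | hm | ⟨r, hm⟩ <;> simp_all
  subst hj
  rcases Nat.eq_zero_or_pos B with hB | hB
  · -- no fillers: use that the two endpoints of `j` differ
    by_contra hne
    have hss : s ≠ s' := fun hss => hne (by rw [hss])
    have hend : endpt L j s = endpt L j s' := by
      have hm : (Sum.inl (endpt L j s) : CV L B) ∈ cedge L B j s' := by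
        rw [← h, mem_cedge]; tauto
      rw [mem_cedge] at hm
      rcases hm with hm | hm | ⟨r, hm⟩ <;> simp_all
    rcases s <;> rcases s' <;> simp_all <;>
      first
      | exact endpt_ne L j hend
      | exact endpt_ne L j hend.symm
  · -- a filler vertex determines the side
    have hm : (Sum.inr (Sum.inr ((j, s), ⟨0, hB⟩)) : CV L B) ∈ cedge L B j s' := by
      rw [← h, mem_cedge]
      right; right; exact ⟨⟨0, hB⟩, rfl⟩
    rw [mem_cedge] at hm
    rcases hm with hm | hm | ⟨r, hm⟩ <;> simp_all

lemma card_CE : (CE L B).card = 6*L+6 := by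
  rw [CE, Finset.card_image_of_injective _ (cedge_inj L B), Finset.card_univ]
  simp only [Fintype.card_prod, Fintype.card_bool, Fintype.card_fin]
  ring

lemma mem_CE {e : Finset (CV L B)} :
    e ∈ CE L B ↔ ∃ j s, cedge L B j s = e := by
  simp only [CE, Finset.mem_image, Finset.mem_univ, true_and, Prod.exists]

/-- incidences of each vertex, as a set of edge indices -/
lemma vdeg_eq (x : CV L B) : vdeg (CE L B) x
    = ((Finset.univ : Finset (Fin (3*L+3) × Bool)).filter
        (fun p => x ∈ cedge L B p.1 p.2)).card := by
  rw [vdeg, CE, Finset.filter_image, Finset.card_image_of_injective _ (cedge_inj L B)]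

lemma sub_edges (j₀ : Fin (3*L+3)) :
    (Finset.univ : Finset (Fin (3*L+3) × Bool)).filter
      (fun p => (Sum.inr (Sum.inl j₀) : CV L B) ∈ cedge L B p.1 p.2)
    = {(j₀, false), (j₀, true)} := by
  ext ⟨j, s⟩
  simp only [Finset.mem_filter, Finset.mem_univ, true_and, mem_cedge,
    Finset.mem_insert, Finset.mem_singleton, Prod.mk.injEq]
  constructor
  · rintro (h | h | ⟨r, h⟩) <;> simp_all
  · rintro (⟨h1, h2⟩ | ⟨h1, h2⟩) <;> subst h1 <;> subst h2 <;> simp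

lemma fill_edges (j₀ : Fin (3*L+3)) (s₀ : Bool) (r₀ : Fin B) :
    (Finset.univ : Finset (Fin (3*L+3) × Bool)).filter
      (fun p => (Sum.inr (Sum.inr ((j₀,s₀),r₀)) : CV L B) ∈ cedge L B p.1 p.2)
    = {(j₀, s₀)} := by
  ext ⟨j, s⟩
  simp only [Finset.mem_filter, Finset.mem_univ, true_and, mem_cedge,
    Finset.mem_singleton, Prod.mk.injEq]
  constructor
  · rintro (h | h | ⟨r, h⟩) <;> simp_all
  · rintro ⟨h1, h2⟩
    subst h1; subst h2
    right; right; exact ⟨r₀, rfl⟩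

lemma vdeg_sub (j₀ : Fin (3*L+3)) : vdeg (CE L B) (Sum.inr (Sum.inl j₀)) = 2 := by
  rw [vdeg_eq, sub_edges]
  rw [Finset.card_insert_of_notMem (by simp), Finset.card_singleton]

lemma vdeg_fill (j₀ : Fin (3*L+3)) (s₀ : Bool) (r₀ : Fin B) :
    vdeg (CE L B) (Sum.inr (Sum.inr ((j₀,s₀),r₀))) = 1 := by
  rw [vdeg_eq, fill_edges, Finset.card_singleton]

end Constr
end ChainsAux
namespace ChainsAux
namespace Constr
variable (L B : ℕ)

lemma endpt_val_false_lt (j : Fin (3*L+3)) (hj : (j:ℕ) < 2*L+2) :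
    ((endpt L j false : Fin (2*L+2)) : ℕ) = j := by
  rcases endpt_spec L j false with ⟨_,_,h3⟩|⟨_,hc,_⟩|⟨_,hc,_⟩|⟨h1,_,h3⟩|⟨_,hc,_⟩ <;>
    first
    | exact h3
    | exact absurd hc (by simp)
    | omega

lemma endpt_val_true_lt (j : Fin (3*L+3)) (hj : (j:ℕ) < 2*L+1) :
    ((endpt L j true : Fin (2*L+2)) : ℕ) = (j:ℕ)+1 := by
  rcases endpt_spec L j true with ⟨_,hc,_⟩|⟨_,_,h3⟩|⟨h1,_,h3⟩|⟨_,hc,_⟩|⟨h1,_,h3⟩ <;>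
    first
    | exact h3
    | exact absurd hc (by simp)
    | omega

lemma endpt_val_true_top (j : Fin (3*L+3)) (hj : (j:ℕ) = 2*L+1) :
    ((endpt L j true : Fin (2*L+2)) : ℕ) = 0 := by
  rcases endpt_spec L j true with ⟨_,hc,_⟩|⟨h1,_,h3⟩|⟨_,_,h3⟩|⟨_,hc,_⟩|⟨h1,_,h3⟩ <;>
    first
    | exact h3
    | exact absurd hc (by simp)
    | omega

lemma endpt_val_match_false (j : Fin (3*L+3)) (hj : 2*L+2 ≤ (j:ℕ)) :
    ((endpt L j false : Fin (2*L+2)) : ℕ) = 2*((j:ℕ)-(2*L+2)) := by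
  rcases endpt_spec L j false with ⟨h1,_,h3⟩|⟨_,hc,_⟩|⟨_,hc,_⟩|⟨_,_,h3⟩|⟨_,hc,_⟩ <;>
    first
    | exact h3
    | exact absurd hc (by simp)
    | omega

lemma endpt_val_match_true (j : Fin (3*L+3)) (hj : 2*L+2 ≤ (j:ℕ)) :
    ((endpt L j true : Fin (2*L+2)) : ℕ) = 2*((j:ℕ)-(2*L+2))+1 := by
  rcases endpt_spec L j true with ⟨_,hc,_⟩|⟨h1,_,h3⟩|⟨h1,_,h3⟩|⟨_,hc,_⟩|⟨_,_,h3⟩ <;>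
    first
    | exact h3
    | exact absurd hc (by simp)
    | omega

/-- lower bound: every hub is an endpoint of at least three half-edges -/
lemma vdeg_hub_ge (h : Fin (2*L+2)) : 3 ≤ vdeg (CE L B) (Sum.inl h) := by
  have hlt := h.isLt
  rw [vdeg_eq]
  obtain ⟨j1, hj1v, he1⟩ : ∃ j1 : Fin (3*L+3), (j1:ℕ) = (h:ℕ) ∧ endpt L j1 false = h := by
    refine ⟨⟨(h:ℕ), by omega⟩, rfl, Fin.ext ?_⟩
    rw [endpt_val_false_lt L _ (show (h:ℕ) < 2*L+2 from hlt)]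
  obtain ⟨j2, hj2v, he2⟩ : ∃ j2 : Fin (3*L+3), (j2:ℕ) < 2*L+2 ∧ endpt L j2 true = h := by
    by_cases h0 : (h:ℕ) = 0
    · refine ⟨⟨2*L+1, by omega⟩, show 2*L+1 < 2*L+2 by omega, Fin.ext ?_⟩
      rw [endpt_val_true_top L _ (show 2*L+1 = 2*L+1 from rfl)]
      omega
    · refine ⟨⟨(h:ℕ)-1, by omega⟩, show (h:ℕ)-1 < 2*L+2 by omega, Fin.ext ?_⟩
      rw [endpt_val_true_lt L _ (show (h:ℕ)-1 < 2*L+1 by omega)]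
      show (h:ℕ)-1+1 = (h:ℕ)
      omega
  obtain ⟨s3, he3⟩ : ∃ s3 : Bool,
      endpt L (⟨2*L+2+(h:ℕ)/2, by omega⟩ : Fin (3*L+3)) s3 = h := by
    by_cases hp : (h:ℕ) % 2 = 1
    · refine ⟨true, Fin.ext ?_⟩
      rw [endpt_val_match_true L _ (show 2*L+2 ≤ 2*L+2+(h:ℕ)/2 by omega)]
      show 2*((2*L+2+(h:ℕ)/2) - (2*L+2)) + 1 = (h:ℕ)
      omega
    · refine ⟨false, Fin.ext ?_⟩
      rw [endpt_val_match_false L _ (show 2*L+2 ≤ 2*L+2+(h:ℕ)/2 by omega)]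
      show 2*((2*L+2+(h:ℕ)/2) - (2*L+2)) = (h:ℕ)
      omega
  have hne13 : j1 ≠ (⟨2*L+2+(h:ℕ)/2, by omega⟩ : Fin (3*L+3)) := by
    intro heq
    have hv : (j1:ℕ) = 2*L+2+(h:ℕ)/2 := congrArg Fin.val heq
    omega
  have hne23 : j2 ≠ (⟨2*L+2+(h:ℕ)/2, by omega⟩ : Fin (3*L+3)) := by
    intro heq
    have hv : (j2:ℕ) = 2*L+2+(h:ℕ)/2 := congrArg Fin.val heq
    omega
  have hsub : ({(j1, false), (j2, true),
        ((⟨2*L+2+(h:ℕ)/2, by omega⟩ : Fin (3*L+3)), s3)} : Finset (Fin (3*L+3) × Bool))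
      ⊆ (Finset.univ.filter (fun p => (Sum.inl h : CV L B) ∈ cedge L B p.1 p.2)) := by
    intro p hp
    rw [Finset.mem_insert, Finset.mem_insert, Finset.mem_singleton] at hp
    rcases hp with hp | hp | hp <;> subst hp <;>
      refine Finset.mem_filter.2 ⟨Finset.mem_univ _, ?_⟩ <;> rw [mem_cedge] <;> left
    · rw [he1]
    · rw [he2]
    · rw [he3]
  have hcard : ({(j1, false), (j2, true),
        ((⟨2*L+2+(h:ℕ)/2, by omega⟩ : Fin (3*L+3)), s3)} : Finset (Fin (3*L+3) × Bool)).card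
      = 3 := by
    rw [Finset.card_insert_of_notMem, Finset.card_insert_of_notMem,
      Finset.card_singleton]
    · simp only [Finset.mem_singleton, Prod.mk.injEq, not_and]
      intro hj
      exact absurd hj hne23
    · simp only [Finset.mem_insert, Finset.mem_singleton, Prod.mk.injEq, not_or, not_and]
      refine ⟨fun _ => by simp, fun hj => absurd hj hne13⟩
  calc 3 = _ := hcard.symm
    _ ≤ _ := Finset.card_le_card hsub

/-- total degree count -/
lemma sum_vdeg : ∑ x : CV L B, vdeg (CE L B) x = (6*L+6)*(B+2) := by
  have hdc := doublecount (Finset.univ : Finset (CV L B)) (CE L B)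
  simp only [vdeg]
  rw [hdc]
  have hval : ∀ e ∈ CE L B, (e ∩ Finset.univ).card = B+2 := by
    intro e he
    rw [Finset.inter_univ]
    obtain ⟨j, s, rfl⟩ := (mem_CE L B).1 he
    exact card_cedge L B j s
  rw [Finset.sum_congr rfl hval, Finset.sum_const, card_CE, smul_eq_mul]

end Constr
end ChainsAux
namespace ChainsAux
namespace Constr
variable (L B : ℕ)

lemma vdeg_fill' (z : (Fin (3*L+3) × Bool) × Fin B) :
    vdeg (CE L B) (Sum.inr (Sum.inr z)) = 1 := by
  obtain ⟨⟨j, s⟩, r⟩ := z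
  exact vdeg_fill L B j s r

lemma sum_hub : ∑ h : Fin (2*L+2), vdeg (CE L B) (Sum.inl h) = 6*L+6 := by
  have hs1 : ∑ x : CV L B, vdeg (CE L B) x
      = ∑ h : Fin (2*L+2), vdeg (CE L B) (Sum.inl h)
        + (∑ j : Fin (3*L+3), vdeg (CE L B) (Sum.inr (Sum.inl j))
        + ∑ z : (Fin (3*L+3) × Bool) × Fin B, vdeg (CE L B) (Sum.inr (Sum.inr z))) := by
    rw [Fintype.sum_sum_type, Fintype.sum_sum_type]
  have hs2 : ∑ j : Fin (3*L+3), vdeg (CE L B) (Sum.inr (Sum.inl j)) = 2*(3*L+3) := by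
    rw [Finset.sum_congr rfl (fun j _ => vdeg_sub L B j), Finset.sum_const,
      Finset.card_univ, Fintype.card_fin, smul_eq_mul]
    ring
  have hs3 : ∑ z : (Fin (3*L+3) × Bool) × Fin B, vdeg (CE L B) (Sum.inr (Sum.inr z))
      = (3*L+3)*2*B := by
    rw [Finset.sum_congr rfl (fun z _ => vdeg_fill' L B z), Finset.sum_const,
      Finset.card_univ, Fintype.card_prod, Fintype.card_prod, Fintype.card_bool,
      Fintype.card_fin, Fintype.card_fin, smul_eq_mul]
    ring
  have htot := sum_vdeg L B
  rw [hs1, hs2, hs3] at htot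
  have e1 : (6*L+6)*(B+2) = 2*(3*L+3) + (3*L+3)*2*B + (6*L+6) := by ring
  linarith [htot, e1]

lemma vdeg_hub (h : Fin (2*L+2)) : vdeg (CE L B) (Sum.inl h) = 3 := by
  by_contra hne
  have hge := vdeg_hub_ge L B h
  have h4 : 4 ≤ vdeg (CE L B) (Sum.inl h) := by omega
  have hsum := sum_hub L B
  have hsplit := Finset.add_sum_erase Finset.univ
    (fun h : Fin (2*L+2) => vdeg (CE L B) (Sum.inl h)) (Finset.mem_univ h)
  have hlow : (Finset.univ.erase h).card • 3
      ≤ ∑ x ∈ Finset.univ.erase h, vdeg (CE L B) (Sum.inl x) := by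
    apply Finset.card_nsmul_le_sum
    intro x _
    exact vdeg_hub_ge L B x
  rw [Finset.card_erase_of_mem (Finset.mem_univ h), Finset.card_univ, Fintype.card_fin,
    smul_eq_mul] at hlow
  have hsplit' : vdeg (CE L B) (Sum.inl h)
      + ∑ x ∈ Finset.univ.erase h, vdeg (CE L B) (Sum.inl x)
      = ∑ x : Fin (2*L+2), vdeg (CE L B) (Sum.inl x) := hsplit
  omega

end Constr
end ChainsAux
namespace ChainsAux
namespace Constr
variable (L B : ℕ)

lemma deg2_is_sub {x : CV L B} (hx : vdeg (CE L B) x = 2) :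
    ∃ j, x = Sum.inr (Sum.inl j) := by
  rcases x with h | j | z
  · rw [vdeg_hub] at hx; omega
  · exact ⟨j, rfl⟩
  · rw [vdeg_fill'] at hx; omega

lemma Dv_cedge (j : Fin (3*L+3)) (s : Bool) :
    (cedge L B j s).filter (fun v => 2 ≤ vdeg (CE L B) v)
      = {Sum.inl (endpt L j s), Sum.inr (Sum.inl j)} := by
  ext x
  rw [Finset.mem_filter, mem_cedge, Finset.mem_insert, Finset.mem_singleton]
  constructor
  · rintro ⟨h | h | ⟨r, h⟩, hdeg⟩
    · exact Or.inl h
    · exact Or.inr h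
    · subst h; rw [vdeg_fill'] at hdeg; omega
  · rintro (h | h) <;> subst h
    · exact ⟨Or.inl rfl, by rw [vdeg_hub]; omega⟩
    · exact ⟨Or.inr (Or.inl rfl), by rw [vdeg_sub]⟩

lemma no_spE : ∀ e ∈ CE L B, ¬ vSpE (CE L B) e := by
  intro e he hsp
  obtain ⟨j, s, rfl⟩ := (mem_CE L B).1 he
  have h3 := hsp.2
  rw [Dv_cedge] at h3
  have : ({Sum.inl (endpt L j s), Sum.inr (Sum.inl j)} : Finset (CV L B)).card ≤ 2 := by
    apply le_trans (Finset.card_insert_le _ _)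
    simp
  omega

lemma spV_iff (x : CV L B) : vSpV (CE L B) x ↔ 3 ≤ vdeg (CE L B) x := by
  constructor
  · rintro (⟨e, he, _⟩ | h)
    · exact absurd he (no_spE L B e he.1)
    · exact h
  · intro h; exact Or.inr h

lemma S2count : ((Finset.univ : Finset (CV L B)).filter
      (fun v => vSpV (CE L B) v ∧ 2 ≤ vdeg (CE L B) v)).card = 2*L+2 := by
  have heq : ((Finset.univ : Finset (CV L B)).filter
        (fun v => vSpV (CE L B) v ∧ 2 ≤ vdeg (CE L B) v))
      = (Finset.univ : Finset (Fin (2*L+2))).map ⟨Sum.inl, Sum.inl_injective⟩ := by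
    ext x
    simp only [Finset.mem_filter, Finset.mem_univ, true_and, Finset.mem_map,
      Function.Embedding.coeFn_mk]
    constructor
    · rintro ⟨hsp, _⟩
      rw [spV_iff] at hsp
      rcases x with h | j | z
      · exact ⟨h, rfl⟩
      · rw [vdeg_sub] at hsp; omega
      · rw [vdeg_fill'] at hsp; omega
    · rintro ⟨h, rfl⟩
      rw [spV_iff, vdeg_hub]
      exact ⟨by omega, by omega⟩
  rw [heq, Finset.card_map, Finset.card_univ, Fintype.card_fin]

lemma vsmooth : ¬ ∃ e ∈ CE L B, ∃ S ⊆ e, S.card = (B+2) - 1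
    ∧ ∀ v ∈ S, vdeg (CE L B) v = 1 := by
  rintro ⟨e, he, S, hSe, hcard, hdeg⟩
  obtain ⟨j, s, rfl⟩ := (mem_CE L B).1 he
  have h1 : Sum.inl (endpt L j s) ∉ S := by
    intro hx
    have := hdeg _ hx
    rw [vdeg_hub] at this
    omega
  have h2 : (Sum.inr (Sum.inl j) : CV L B) ∉ S := by
    intro hx
    have := hdeg _ hx
    rw [vdeg_sub] at this
    omega
  have hsub : S ⊆ fillers L B j s := by
    intro x hx
    have := hSe hx
    rw [mem_cedge] at this
    rcases this with h | h | ⟨r, h⟩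
    · subst h; exact absurd hx h1
    · subst h; exact absurd hx h2
    · subst h; rw [mem_fillers]; exact ⟨r, rfl⟩
  have := Finset.card_le_card hsub
  rw [card_fillers, hcard] at this
  omega

lemma vlink_symm : ∀ {x y : CV L B},
    (∃ e ∈ CE L B, x ∈ e ∧ y ∈ e) → (∃ e ∈ CE L B, y ∈ e ∧ x ∈ e) := by
  rintro x y ⟨e, he, hx, hy⟩
  exact ⟨e, he, hy, hx⟩

lemma hub_path : ∀ (k : ℕ) (hk : k < 2*L+2),
    Relation.ReflTransGen (fun x y : CV L B => ∃ e ∈ CE L B, x ∈ e ∧ y ∈ e)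
      (Sum.inl ⟨k, hk⟩) (Sum.inl ⟨0, by omega⟩) := by
  intro k
  induction k with
  | zero => intro hk; exact Relation.ReflTransGen.refl
  | succ k ih =>
    intro hk
    have hk' : k < 2*L+2 := by omega
    have hjk : (k : ℕ) < 3*L+3 := by omega
    have he1 : (Sum.inl (⟨k+1, hk⟩ : Fin (2*L+2)) : CV L B) ∈ cedge L B ⟨k, hjk⟩ true := by
      rw [mem_cedge]
      left
      congr 1
      apply Fin.ext
      rw [endpt_val_true_lt L _ (show k < 2*L+1 by omega)]
    have he2 : (Sum.inr (Sum.inl ⟨k, hjk⟩) : CV L B) ∈ cedge L B ⟨k, hjk⟩ true := by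
      rw [mem_cedge]; right; left; rfl
    have he3 : (Sum.inr (Sum.inl ⟨k, hjk⟩) : CV L B) ∈ cedge L B ⟨k, hjk⟩ false := by
      rw [mem_cedge]; right; left; rfl
    have he4 : (Sum.inl (⟨k, hk'⟩ : Fin (2*L+2)) : CV L B) ∈ cedge L B ⟨k, hjk⟩ false := by
      rw [mem_cedge]
      left
      congr 1
      apply Fin.ext
      rw [endpt_val_false_lt L _ (show (k:ℕ) < 2*L+2 from hk')]
    have hmem1 : cedge L B ⟨k, hjk⟩ true ∈ CE L B := (mem_CE L B).2 ⟨_, _, rfl⟩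
    have hmem2 : cedge L B ⟨k, hjk⟩ false ∈ CE L B := (mem_CE L B).2 ⟨_, _, rfl⟩
    have step1 : Relation.ReflTransGen (fun x y : CV L B => ∃ e ∈ CE L B, x ∈ e ∧ y ∈ e)
        (Sum.inl ⟨k+1, hk⟩) (Sum.inr (Sum.inl ⟨k, hjk⟩)) :=
      Relation.ReflTransGen.single ⟨_, hmem1, he1, he2⟩
    have step2 : Relation.ReflTransGen (fun x y : CV L B => ∃ e ∈ CE L B, x ∈ e ∧ y ∈ e)
        (Sum.inr (Sum.inl ⟨k, hjk⟩)) (Sum.inl ⟨k, hk'⟩) :=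
      Relation.ReflTransGen.single ⟨_, hmem2, he3, he4⟩
    exact (step1.trans step2).trans (ih hk')

lemma to_hub : ∀ x : CV L B, ∃ h : Fin (2*L+2),
    Relation.ReflTransGen (fun x y : CV L B => ∃ e ∈ CE L B, x ∈ e ∧ y ∈ e)
      x (Sum.inl h) := by
  intro x
  rcases x with h | j | ⟨⟨j, s⟩, r⟩
  · exact ⟨h, Relation.ReflTransGen.refl⟩
  · refine ⟨endpt L j false, Relation.ReflTransGen.single
      ⟨cedge L B j false, (mem_CE L B).2 ⟨_, _, rfl⟩, ?_, ?_⟩⟩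
    · rw [mem_cedge]; right; left; rfl
    · rw [mem_cedge]; left; rfl
  · refine ⟨endpt L j s, Relation.ReflTransGen.single
      ⟨cedge L B j s, (mem_CE L B).2 ⟨_, _, rfl⟩, ?_, ?_⟩⟩
    · rw [mem_cedge]; right; right; exact ⟨r, rfl⟩
    · rw [mem_cedge]; left; rfl

lemma vconn : ∀ x y : CV L B,
    Relation.ReflTransGen (fun x y : CV L B => ∃ e ∈ CE L B, x ∈ e ∧ y ∈ e) x y := by
  have hsymm : Symmetric (fun x y : CV L B => ∃ e ∈ CE L B, x ∈ e ∧ y ∈ e) :=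
    fun x y h => vlink_symm L B h
  have hRs : ∀ {a b : CV L B},
      Relation.ReflTransGen (fun x y : CV L B => ∃ e ∈ CE L B, x ∈ e ∧ y ∈ e) a b →
      Relation.ReflTransGen (fun x y : CV L B => ∃ e ∈ CE L B, x ∈ e ∧ y ∈ e) b a :=
    fun {a b} h => (@Relation.ReflTransGen.symmetric _
      (fun x y : CV L B => ∃ e ∈ CE L B, x ∈ e ∧ y ∈ e) ⟨fun _ _ h' => hsymm h'⟩).symm a b h
  intro x y
  obtain ⟨h1, p1⟩ := to_hub L B x
  obtain ⟨h2, p2⟩ := to_hub L B y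
  have q1 := hub_path L B h1.1 h1.2
  have q2 := hub_path L B h2.1 h2.2
  exact (p1.trans q1).trans (hRs (p2.trans q2))

lemma vbasic : ∀ e ∈ CE L B, ∃ A C : Finset (CV L B),
    ∀ g, Relation.ReflTransGen (vCL (CE L B)) e g → g = A ∨ g = C := by
  intro e he
  obtain ⟨j, s, rfl⟩ := (mem_CE L B).1 he
  refine ⟨cedge L B j false, cedge L B j true, ?_⟩
  intro g hg
  induction hg with
  | refl => rcases s <;> [exact Or.inl rfl; exact Or.inr rfl]
  | tail _hR hlink ih =>
    obtain ⟨hg'E, hgE, _, _, v, hv1, hv2, hvdeg, _⟩ := hlink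
    obtain ⟨j'', rfl⟩ := deg2_is_sub L B hvdeg
    have hj : j'' = j := by
      rcases ih with h | h <;> subst h <;> rw [mem_cedge] at hv1 <;>
        rcases hv1 with h | h | ⟨r, h⟩ <;> simp_all
    subst hj
    obtain ⟨jg, sg, rfl⟩ := (mem_CE L B).1 hgE
    have hjg : jg = j'' := by
      rw [mem_cedge] at hv2
      rcases hv2 with h | h | ⟨r, h⟩ <;> simp_all
    subst hjg
    rcases sg <;> [exact Or.inl rfl; exact Or.inr rfl]

end Constr
end ChainsAux
namespace ChainsAux

theorem exists_extremal (b ℓ : ℕ) (hb : 2 ≤ b) (hℓ : 1 ≤ ℓ) :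
    ∃ (n : ℕ) (E : Finset (Finset (Fin n))), Uniform b E ∧ Connected E ∧
      SmoothHG b E ∧ Basic E ∧ ((b : ℤ) - 1) * E.card = (n : ℤ) + ℓ ∧
      numChains E = 3 * ℓ := by
  obtain ⟨L, rfl⟩ : ∃ L, ℓ = L + 1 := ⟨ℓ - 1, by omega⟩
  obtain ⟨B, rfl⟩ : ∃ B, b = B + 2 := ⟨b - 2, by omega⟩
  set n := Fintype.card (Constr.CV L B) with hnn
  let σ : Constr.CV L B ≃ Fin n := Fintype.equivFin (Constr.CV L B)
  set E := tr σ (Constr.CE L B) with hE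
  have hu : Uniform (B+2) E := uniform_tr σ _ (fun e he => by
    obtain ⟨j, s, rfl⟩ := (Constr.mem_CE L B).1 he
    exact Constr.card_cedge L B j s)
  have hc : Connected E := connected_tr σ _ (Constr.vconn L B)
  have hs : SmoothHG (B+2) E := smooth_tr σ _ (Constr.vsmooth L B)
  have hba : Basic E := basic_tr σ _ (Constr.vbasic L B)
  have hcard : E.card = 6*L+6 := by rw [hE, card_tr]; exact Constr.card_CE L B
  have hn : n = 2*L+2 + (3*L+3 + (3*L+3)*2*B) := by
    rw [hnn]
    simp only [Constr.CV, Fintype.card_sum, Fintype.card_prod, Fintype.card_bool,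
      Fintype.card_fin]
  have hx : (((B+2 : ℕ) : ℤ) - 1) * (E.card : ℤ) = (n : ℤ) + ((L+1 : ℕ) : ℤ) := by
    rw [hcard, hn]
    push_cast
    ring
  have hS2 : (S2 E).card = 2*L+2 := by
    rw [hE, S2_tr]
    exact Constr.S2count L B
  have hEs : Es E = ∅ := Es_tr σ _ (Constr.no_spE L B)
  have hsum0 : ∑ v ∈ S2 E, degs E v = 0 :=
    Finset.sum_eq_zero (fun v _ => by rw [degs, hEs]; simp)
  have hm := (master E hu (by omega) hs hc hba (by omega) hx).1
  rw [hS2, hEs, hsum0] at hm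
  simp only [Finset.card_empty, Nat.cast_zero, Nat.cast_ofNat] at hm
  refine ⟨n, E, hu, hc, hs, hba, hx, ?_⟩
  have : (numChains E : ℤ) = ((3 * (L+1) : ℕ) : ℤ) := by
    rw [hm]
    push_cast
    ring
  exact_mod_cast this

end ChainsAux

/-- In a `b`-uniform basic complex component of excess `ℓ ≥ 1` (a smooth
connected hypergraph with all chains of minimal length), the number `p` of
chains satisfies `p ≤ 3ℓ`, and the bound is attained by some component. -/
theorem chains_le_three_excess (b ℓ : ℕ) (hb : 2 ≤ b) (hℓ : 1 ≤ ℓ) :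
    (∀ (n : ℕ) (E : Finset (Finset (Fin n))), Uniform b E → Connected E →
        SmoothHG b E → Basic E → ((b : ℤ) - 1) * E.card = (n : ℤ) + ℓ →
        numChains E ≤ 3 * ℓ) ∧
    (∃ (n : ℕ) (E : Finset (Finset (Fin n))), Uniform b E ∧ Connected E ∧
        SmoothHG b E ∧ Basic E ∧ ((b : ℤ) - 1) * E.card = (n : ℤ) + ℓ ∧
        numChains E = 3 * ℓ) := by
  constructor
  · intro n E hu hc hs hba hx
    exact (ChainsAux.master E hu hb hs hc hba hℓ hx).2
  · exact ChainsAux.exists_extremal b ℓ hb hℓ
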